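/- Let a, b, c > 0. Then μ₁ > 0, and for every Q ∈ S₀ with 0 < |Q| ≤ 1 one has f*(Q) ≥ μ₁ (1 − |Q|)² + σ β(Q) |Q|³. -/

import Mathlib

open Matrix

noncomputable section

abbrev M3 : Type := Matrix (Fin 3) (Fin 3) ℝ

def frob (Q : M3) : ℝ := Real.sqrt (∑ i, ∑ j, (Q i j) ^ 2)

def beta (Q : M3) : ℝ := 1 - 6 * ((Q * Q * Q).trace) ^ 2 / ((Q * Q).trace) ^ 3

def sstar (a b c : ℝ) : ℝ := (b + Real.sqrt (b ^ 2 + 24 * a * c)) / (4 * c)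

def bstar (a b c : ℝ) : ℝ := Real.sqrt (2/3) * sstar a b c * b

def cstar (a b c : ℝ) : ℝ := (2/3) * (sstar a b c) ^ 2 * c

def kstar (a b c : ℝ) : ℝ := a/2 + sstar a b c * b/9 - (sstar a b c) ^ 2 * c/6

/-- The rescaled Landau-de Gennes bulk potential. -/
def fstar (a b c : ℝ) (Q : M3) : ℝ :=
  kstar a b c - (a/2) * (Q * Q).trace - (bstar a b c / 3) * (Q * Q * Q).trace
    + (cstar a b c / 4) * ((Q * Q).trace) ^ 2

/-- φ(X) = A + BX + CX² with A = a/2 + s_*²c/3, B = s_*b/9 − 2s_*²c/3, C = s_*²c/6. -/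
def phiF (a b c X : ℝ) : ℝ :=
  (a/2 + (sstar a b c) ^ 2 * c / 3)
    + (sstar a b c * b / 9 - 2 * (sstar a b c) ^ 2 * c / 3) * X
    + ((sstar a b c) ^ 2 * c / 6) * X ^ 2

/-- μ₁ = min_{X ∈ [0,1]} φ(X). -/
def mu1 (a b c : ℝ) : ℝ := sInf (phiF a b c '' Set.Icc 0 1)

/-- μ₂ = max_{X ∈ [0,1]} φ(X). -/
def mu2 (a b c : ℝ) : ℝ := sSup (phiF a b c '' Set.Icc 0 1)

/-- σ = s_* b / 18. -/
def sigmaP (a b c : ℝ) : ℝ := sstar a b c * b / 18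

lemma sstar_pos (a b c : ℝ) (ha : 0 < a) (hb : 0 < b) (hc : 0 < c) : 0 < sstar a b c := by
  have h : 0 < Real.sqrt (b ^ 2 + 24 * a * c) := Real.sqrt_pos.mpr (by positivity)
  unfold sstar; positivity

lemma sstar_eq (a b c : ℝ) (ha : 0 < a) (hb : 0 < b) (hc : 0 < c) :
    2 * c * (sstar a b c) ^ 2 = b * (sstar a b c) + 3 * a := by
  have hD : (0:ℝ) ≤ b ^ 2 + 24 * a * c := by positivity
  set R := Real.sqrt (b ^ 2 + 24 * a * c) with hRdef
  have h : R ^ 2 = b ^ 2 + 24 * a * c := Real.sq_sqrt hD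
  have hc4 : (4 * c) ≠ 0 := by positivity
  unfold sstar
  rw [← hRdef]
  field_simp
  linear_combination 2 * h

lemma key_ineq (a b c s e t w : ℝ) (ha : 0 < a) (hb : 0 < b) (hc : 0 < c) (hs : 0 < s)
    (hq : 2*c*s^2 = b*s + 3*a) (he : e^2 = 2/3)
    (ht : 0 < t) (ht1 : t ≤ 1) :
    (a/2 + s*b/9 - s^2*c/6)*(1-t)^2 + (s*b/18)*(1 - 6*w^2)*t^3
      ≤ (a/2 + s*b/9 - s^2*c/6) - (a/2)*t^2 - (e*s*b/3)*(w*t^3) + ((2/3)*s^2*c/4)*t^4 := by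
  have hid : ((a/2 + s*b/9 - s^2*c/6) - (a/2)*t^2 - (e*s*b/3)*(w*t^3) + ((2/3)*s^2*c/4)*t^4)
      - ((a/2 + s*b/9 - s^2*c/6)*(1-t)^2 + (s*b/18)*(1 - 6*w^2)*t^3)
    = (s*b/3)*t^3*(w - e/2)^2 + (1-t)^2*(2*(a/4+s*b/36)*t + (s^2*c/6)*t^2) := by
    linear_combination ((t^3 - t)/6) * hq - (s*b/12)*t^3 * he
  nlinarith [mul_nonneg (mul_nonneg (mul_nonneg hs.le hb.le) (pow_pos ht 3).le) (sq_nonneg (w - e/2)),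
    mul_nonneg (sq_nonneg (1-t)) (mul_nonneg ht.le
      (by nlinarith [mul_pos hs hb, mul_nonneg (mul_nonneg (sq_nonneg s) hc.le) ht.le] :
        (0:ℝ) ≤ 2*(a/4+s*b/36) + (s^2*c/6)*t)),
    sq_nonneg (1-t)]

lemma phi_lb (a b c : ℝ) (ha : 0 < a) (hb : 0 < b) (hc : 0 < c) :
    ∀ X ∈ Set.Icc (0:ℝ) 1, phiF a b c 1 ≤ phiF a b c X := by
  intro X hX
  obtain ⟨hX0, hX1⟩ := hX
  have hs := sstar_pos a b c ha hb hc
  have hq := sstar_eq a b c ha hb hc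
  set s := sstar a b c
  have hid : phiF a b c X - phiF a b c 1
      = (1 - X) * (s^2*c/2 - s*b/9 - (s^2*c/6)*X) := by
    unfold phiF; ring
  have hfac : 0 ≤ s^2*c/2 - s*b/9 - (s^2*c/6)*X := by
    nlinarith [mul_pos hs hb, mul_nonneg (mul_nonneg (sq_nonneg s) hc.le) (sub_nonneg.mpr hX1)]
  nlinarith [mul_nonneg (sub_nonneg.mpr hX1) hfac]

lemma mu1_eq (a b c : ℝ) (ha : 0 < a) (hb : 0 < b) (hc : 0 < c) :
    mu1 a b c = kstar a b c := by
  have h1 : phiF a b c 1 = kstar a b c := by unfold phiF kstar; ring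
  have hmem : phiF a b c 1 ∈ phiF a b c '' Set.Icc 0 1 :=
    ⟨1, by norm_num, rfl⟩
  have hlb : ∀ y ∈ phiF a b c '' Set.Icc (0:ℝ) 1, phiF a b c 1 ≤ y := by
    rintro y ⟨x, hx, rfl⟩; exact phi_lb a b c ha hb hc x hx
  rw [← h1]
  refine le_antisymm (csInf_le ⟨phiF a b c 1, hlb⟩ hmem) (le_csInf ⟨_, hmem⟩ hlb)

/-- μ₁ > 0, and for every Q ∈ S₀ with 0 < |Q| ≤ 1 one has
f*(Q) ≥ μ₁ (1 − |Q|)² + σ β(Q) |Q|³. -/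
theorem stmt9 (a b c : ℝ) (ha : 0 < a) (hb : 0 < b) (hc : 0 < c) :
    0 < mu1 a b c ∧
    ∀ Q : M3, Qᵀ = Q → Q.trace = 0 → Q ≠ 0 → frob Q ≤ 1 →
      mu1 a b c * (1 - frob Q) ^ 2 + sigmaP a b c * beta Q * frob Q ^ 3 ≤
        fstar a b c Q := by
  have hs := sstar_pos a b c ha hb hc
  have hq := sstar_eq a b c ha hb hc
  have hmu : mu1 a b c = kstar a b c := mu1_eq a b c ha hb hc
  have hkpos : 0 < kstar a b c := by
    unfold kstar
    nlinarith [mul_pos hs hb]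
  refine ⟨by rw [hmu]; exact hkpos, ?_⟩
  intro Q hsym htr hQ0 hfr1
  have hsym' : ∀ i j, Q j i = Q i j := fun i j => congrFun (congrFun hsym i) j
  -- trace of Q² equals the squared Frobenius norm
  have hT2 : (Q * Q).trace = ∑ i, ∑ j, (Q i j) ^ 2 := by
    rw [Matrix.trace]
    simp only [Matrix.diag, Matrix.mul_apply]
    refine Finset.sum_congr rfl fun i _ => Finset.sum_congr rfl fun j _ => ?_
    rw [hsym' i j, sq]
  -- positivity of the sum of squares
  have hex : ∃ i j, Q i j ≠ 0 := by
    by_contra h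
    push_neg at h
    exact hQ0 (by ext i j; exact h i j)
  obtain ⟨i0, j0, hij⟩ := hex
  have hsum_pos : 0 < ∑ i, ∑ j, (Q i j) ^ 2 := by
    have hrow : 0 < ∑ j, (Q i0 j) ^ 2 :=
      Finset.sum_pos' (fun _ _ => sq_nonneg _)
        ⟨j0, Finset.mem_univ j0, by positivity⟩
    exact Finset.sum_pos' (fun _ _ => Finset.sum_nonneg fun _ _ => sq_nonneg _)
      ⟨i0, Finset.mem_univ i0, hrow⟩
  set t := frob Q with htdef
  have ht : 0 < t := Real.sqrt_pos.mpr hsum_pos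
  have ht2 : t ^ 2 = (Q * Q).trace := by
    rw [htdef, frob, Real.sq_sqrt hsum_pos.le, hT2]
  set T3 := (Q * Q * Q).trace with hT3def
  set e := Real.sqrt (2/3) with hedef
  have he : e ^ 2 = 2/3 := Real.sq_sqrt (by norm_num)
  set s := sstar a b c with hsdef
  set w := T3 / t ^ 3 with hwdef
  have ht3 : (t:ℝ) ^ 3 ≠ 0 := pow_ne_zero 3 ht.ne'
  have hw : w * t ^ 3 = T3 := div_mul_cancel₀ _ ht3
  have hbeta : beta Q = 1 - 6 * w ^ 2 := by
    rw [beta, ← hT3def, ← ht2, hwdef]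
    rw [div_pow]
    rw [show ((t:ℝ)^2)^3 = (t^3)^2 by ring]
    ring
  have hfs : fstar a b c Q
      = (a/2 + s*b/9 - s^2*c/6) - (a/2)*t^2 - (e*s*b/3)*(w*t^3) + ((2/3)*s^2*c/4)*t^4 := by
    rw [fstar, kstar, bstar, cstar, ← hT3def, ← ht2, hw, ← hsdef, ← hedef]
    ring
  have hLHS : mu1 a b c * (1 - t) ^ 2 + sigmaP a b c * beta Q * t ^ 3
      = (a/2 + s*b/9 - s^2*c/6)*(1-t)^2 + (s*b/18)*(1 - 6*w^2)*t^3 := by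
    rw [hmu, hbeta, kstar, sigmaP, ← hsdef]
  rw [hfs, hLHS]
  exact key_ineq a b c s e t w ha hb hc hs hq he ht hfr1
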